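/- Under the assumptions that Σ_i α_i ≤ k ≤ Σ_i β_i and |χ⁻¹(i)| ≥ β_i for all i, the matroid M = (V, ℐ) has rank k, i.e., every maximal independent set has cardinality exactly k. -/
import Mathlib


open Finset

variable {V : Type*} [DecidableEq V] [Fintype V]

/-- Number of vertices of color `i` in `X`. -/
def colorCount {c : ℕ} (χ : V → Fin c) (X : Finset V) (i : Fin c) : ℕ :=
  (X.filter (fun v => χ v = i)).card

/-- The family ℐ of independent sets: color upper bounds hold and there is
still room to satisfy all lower bounds within `k` elements
(`α i - colorCount χ X i` is truncated subtraction, i.e. `max 0 (α i - |X ∩ χ⁻¹ i|)`). -/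
def FairIndep {c : ℕ} (χ : V → Fin c) (α β : Fin c → ℕ) (k : ℕ) (X : Finset V) : Prop :=
  (∀ i, colorCount χ X i ≤ β i) ∧
    X.card + ∑ i, (α i - colorCount χ X i) ≤ k

lemma colorCount_insert {c : ℕ} (χ : V → Fin c) (B : Finset V) {v : V} (hv : v ∉ B) (j : Fin c) :
    colorCount χ (insert v B) j = colorCount χ B j + (if χ v = j then 1 else 0) := by
  unfold colorCount
  rw [Finset.filter_insert]
  split_ifs with h1
  · rw [Finset.card_insert_of_notMem (fun hh => hv (Finset.mem_filter.1 hh).1)]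
  · rfl

theorem fairIndep_rank {c : ℕ} (χ : V → Fin c) (α β : Fin c → ℕ) (k : ℕ)
    (hαβ : ∀ i, α i ≤ β i) (hk1 : ∑ i, α i ≤ k) (hk2 : k ≤ ∑ i, β i)
    (hfull : ∀ i, β i ≤ colorCount χ (Finset.univ : Finset V) i)
    (B : Finset V) (hB : FairIndep χ α β k B)
    (hmax : ∀ B' : Finset V, FairIndep χ α β k B' → B ⊆ B' → B' = B) :
    B.card = k := by
  obtain ⟨hβ, hcard⟩ := hB
  have hBle : B.card ≤ k := le_trans (Nat.le_add_right _ _) hcard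
  by_contra hne
  have hlt : B.card < k := lt_of_le_of_ne hBle hne
  have hsum : ∑ i, colorCount χ B i = B.card := by
    rw [Finset.card_eq_sum_card_fiberwise (f := χ) (fun v _ => Finset.mem_univ (χ v))]
    rfl
  have getv : ∀ i, colorCount χ B i < β i → ∃ v, χ v = i ∧ v ∉ B := by
    intro i hi
    have hvlt : colorCount χ B i < colorCount χ Finset.univ i := lt_of_lt_of_le hi (hfull i)
    by_contra h
    push_neg at h
    have hsub : (Finset.univ.filter (fun v => χ v = i)) ⊆ B.filter (fun v => χ v = i) := by
      intro v hv
      simp only [Finset.mem_filter, Finset.mem_univ, true_and] at hv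
      exact Finset.mem_filter.2 ⟨h v hv, hv⟩
    have := Finset.card_le_card hsub
    unfold colorCount at hvlt
    omega
  by_cases hA : ∃ i, colorCount χ B i < α i
  · obtain ⟨i, hi⟩ := hA
    obtain ⟨v, hvχ, hvB⟩ := getv i (lt_of_lt_of_le hi (hαβ i))
    have hcc : ∀ j, colorCount χ (insert v B) j
        = colorCount χ B j + (if j = i then 1 else 0) := by
      intro j
      rw [colorCount_insert χ B hvB j, hvχ]
      by_cases hj : j = i
      · subst hj; simp
      · rw [if_neg (fun h => hj h.symm), if_neg hj]
    have hβ' : ∀ j, colorCount χ (insert v B) j ≤ β j := by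
      intro j
      rw [hcc]
      by_cases hj : j = i
      · subst hj
        have := lt_of_lt_of_le hi (hαβ j)
        simp; omega
      · simp [hj]; exact hβ j
    have hsum' : (insert v B).card + ∑ j, (α j - colorCount χ (insert v B) j) ≤ k := by
      rw [Finset.card_insert_of_notMem hvB]
      have h1 : ∑ j, (α j - colorCount χ (insert v B) j)
          = ∑ j ∈ Finset.univ.erase i, (α j - colorCount χ B j)
            + (α i - (colorCount χ B i + 1)) := by
        rw [← Finset.sum_erase_add _ _ (Finset.mem_univ i)]
        congr 1
        · apply Finset.sum_congr rfl
          intro j hj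
          rw [hcc]
          simp [Finset.ne_of_mem_erase hj]
        · rw [hcc]; simp
      have h2 : ∑ j, (α j - colorCount χ B j)
          = ∑ j ∈ Finset.univ.erase i, (α j - colorCount χ B j)
            + (α i - colorCount χ B i) :=
        (Finset.sum_erase_add _ _ (Finset.mem_univ i)).symm
      omega
    have hEq := hmax _ ⟨hβ', hsum'⟩ (Finset.subset_insert v B)
    exact hvB (hEq ▸ Finset.mem_insert_self v B)
  · push_neg at hA
    have hexists : ∃ i, colorCount χ B i < β i := by
      by_contra h
      push_neg at h
      have : ∑ i, β i ≤ ∑ i, colorCount χ B i := Finset.sum_le_sum fun i _ => h i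
      omega
    obtain ⟨i, hi⟩ := hexists
    obtain ⟨v, hvχ, hvB⟩ := getv i hi
    have hβ' : ∀ j, colorCount χ (insert v B) j ≤ β j := by
      intro j
      rw [colorCount_insert χ B hvB j]
      by_cases hj : χ v = j
      · rw [if_pos hj]
        have hji : j = i := by rw [← hj, hvχ]
        subst hji
        omega
      · rw [if_neg hj]
        have := hβ j
        omega
    have hsum' : (insert v B).card + ∑ j, (α j - colorCount χ (insert v B) j) ≤ k := by
      rw [Finset.card_insert_of_notMem hvB]
      have hz : ∑ j, (α j - colorCount χ (insert v B) j) = 0 :=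
        Finset.sum_eq_zero fun j _ => by
          rw [colorCount_insert χ B hvB j]
          have := hA j
          split_ifs <;> omega
      omega
    have hEq := hmax _ ⟨hβ', hsum'⟩ (Finset.subset_insert v B)
    exact hvB (hEq ▸ Finset.mem_insert_self v B)
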